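/- With F of characteristic 2, 𝒢, d_{ij}, and I as above, for every ℓ > 0 the product ((y1,y2)+1)((y3,y4)+1)···((y_{2ℓ-1},y_{2ℓ})+1) = d_{12} d_{34} ··· d_{(2ℓ-1)(2ℓ)} does not belong to I. -/

import Mathlib

/-- The group commutator `(a,b) = a⁻¹ b⁻¹ a b`. -/
def gc {G : Type*} [Group G] (a b : G) : G := a⁻¹ * b⁻¹ * a * b

/-- The relations `yᵢ² = 1` and `((yᵢ,yⱼ),yₖ) = 1`. -/
def grpRels : Set (FreeGroup ℕ) :=
  (Set.range fun i => FreeGroup.of i ^ 2) ∪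
    {x | ∃ i j k, x = gc (gc (FreeGroup.of i) (FreeGroup.of j)) (FreeGroup.of k)}

/-- The group `𝒢` presented by `yᵢ² = 1`, `((yᵢ,yⱼ),yₖ) = 1`. -/
def GrpG : Type := PresentedGroup grpRels

instance : Group GrpG := by unfold GrpG; infer_instance

/-- The generator `yᵢ` of `𝒢`. -/
def yy (i : ℕ) : GrpG := PresentedGroup.of i

/-- `d_{ij} = (yᵢ,yⱼ) + 1` in the group algebra `F𝒢`. -/
noncomputable def dd (F : Type*) [Field F] (i j : ℕ) : MonoidAlgebra F GrpG :=
  MonoidAlgebra.of F GrpG (gc (yy i) (yy j)) + 1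

/-- The two-sided ideal `I` of `F𝒢` generated by all
`d_{i₁i₂} d_{i₃i₄} + d_{i₁i₃} d_{i₂i₄}`. -/
noncomputable def II (F : Type*) [Field F] : TwoSidedIdeal (MonoidAlgebra F GrpG) :=
  TwoSidedIdeal.span
    {x | ∃ i1 i2 i3 i4, x = dd F i1 i2 * dd F i3 i4 + dd F i1 i3 * dd F i2 i4}

namespace StmtAux
open scoped symmDiff
set_option linter.unusedSectionVars false
set_option linter.unusedVariables false
set_option maxHeartbeats 1000000

variable {F : Type*} [Field F] [CharP F 2]

abbrev VV (F : Type*) := (Finset ℕ × Finset ℕ) → F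

lemma addSelfF (x : F) : x + x = 0 := by
  have h : (2 : F) = 0 := by exact_mod_cast CharP.cast_eq_zero F 2
  calc x + x = 2 * x := by ring
  _ = 0 := by rw [h, zero_mul]

def Amap (i : ℕ) : Module.End F (VV F) where
  toFun v p := v (p.1, p.2 ∆ {i})
  map_add' v w := rfl
  map_smul' c v := rfl

@[simp] lemma Amap_apply (i : ℕ) (v : VV F) (p : Finset ℕ × Finset ℕ) :
    Amap i v p = v (p.1, p.2 ∆ {i}) := rfl

def Emap (i j : ℕ) : Module.End F (VV F) where
  toFun v p := if i ≠ j ∧ i ∈ p.1 ∧ j ∈ p.1 then v ((p.1.erase i).erase j, p.2) else 0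
  map_add' v w := by
    funext p
    by_cases h : i ≠ j ∧ i ∈ p.1 ∧ j ∈ p.1 <;> simp [h]
  map_smul' c v := by
    funext p
    by_cases h : i ≠ j ∧ i ∈ p.1 ∧ j ∈ p.1 <;> simp [h]

@[simp] lemma Emap_apply (i j : ℕ) (v : VV F) (p : Finset ℕ × Finset ℕ) :
    Emap i j v p = if i ≠ j ∧ i ∈ p.1 ∧ j ∈ p.1 then v ((p.1.erase i).erase j, p.2) else 0 := rfl

def Bmap (i : ℕ) : Module.End F (VV F) where
  toFun v p := ∑ j ∈ p.1, if i ∈ p.1 ∧ j ∈ p.1 ∧ j < i ∧ j ∉ p.2 then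
      v ((p.1.erase i).erase j, insert j p.2) else 0
  map_add' v w := by
    funext p
    simp only [Pi.add_apply, ← Finset.sum_add_distrib]
    refine Finset.sum_congr rfl fun j _ => ?_
    by_cases h : i ∈ p.1 ∧ j ∈ p.1 ∧ j < i ∧ j ∉ p.2 <;> simp [h]
  map_smul' c v := by
    funext p
    simp only [RingHom.id_apply, Pi.smul_apply, Finset.smul_sum]
    refine Finset.sum_congr rfl fun j _ => ?_
    by_cases h : i ∈ p.1 ∧ j ∈ p.1 ∧ j < i ∧ j ∉ p.2 <;> simp [h]

@[simp] lemma Bmap_apply (i : ℕ) (v : VV F) (p : Finset ℕ × Finset ℕ) :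
    Bmap i v p = ∑ j ∈ p.1, if i ∈ p.1 ∧ j ∈ p.1 ∧ j < i ∧ j ∉ p.2 then
      v ((p.1.erase i).erase j, insert j p.2) else 0 := rfl

lemma AB (i j : ℕ) : (Amap i * Bmap j + Bmap j * Amap i : Module.End F (VV F))
    = if i < j then Emap i j else 0 := by
  apply LinearMap.ext; intro v; funext p; obtain ⟨U, S⟩ := p
  simp only [LinearMap.add_apply, Pi.add_apply, Module.End.mul_apply, Amap_apply, Bmap_apply]
  rw [← Finset.sum_add_distrib]
  trans ∑ k ∈ U, (if k = i ∧ i ∈ U ∧ j ∈ U ∧ i < j then v ((U.erase i).erase j, S) else 0)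
  · refine Finset.sum_congr rfl fun k hk => ?_
    by_cases hki : k = i
    · subst hki
      by_cases hS : k ∈ S
      · have h1 : k ∉ S ∆ {k} := by simp [Finset.mem_symmDiff, hS]
        have h2 : insert k (S ∆ {k}) = S := by
          ext x
          simp only [Finset.mem_insert, Finset.mem_symmDiff, Finset.mem_singleton]
          constructor
          · rintro (rfl | ⟨hx1, hx2⟩ | ⟨rfl, hx⟩)
            · exact hS
            · exact hx1
            · exact absurd hS hx
          · intro hx
            by_cases hxk : x = k
            · exact Or.inl hxk
            · exact Or.inr (Or.inl ⟨hx, hxk⟩)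
        rw [if_neg (show ¬(j ∈ U ∧ k ∈ U ∧ k < j ∧ k ∉ S) from fun hcon => hcon.2.2.2 hS), add_zero, h2]
        split_ifs with ha hb <;> try tauto
        congr 1
        refine Prod.ext ?_ rfl
        ext x; simp only [Finset.mem_erase]; tauto
      · have h1 : k ∈ S ∆ {k} := by simp [Finset.mem_symmDiff, hS]
        have h2 : (insert k S) ∆ {k} = S := by
          ext x
          simp only [Finset.mem_symmDiff, Finset.mem_insert, Finset.mem_singleton]
          constructor
          · rintro (⟨(rfl | hx), hx2⟩ | ⟨rfl, hx⟩)
            · exact absurd rfl hx2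
            · exact hx
            · exact absurd (Or.inl rfl) hx
          · intro hx
            have hxk : x ≠ k := fun h => hS (h ▸ hx)
            exact Or.inl ⟨Or.inr hx, hxk⟩
        rw [if_neg (show ¬(j ∈ U ∧ k ∈ U ∧ k < j ∧ k ∉ S ∆ {k}) from fun hcon => hcon.2.2.2 h1), zero_add, h2]
        split_ifs with ha hb <;> try tauto
        congr 1
        refine Prod.ext ?_ rfl
        ext x; simp only [Finset.mem_erase]; tauto
    · have hmem : k ∈ S ∆ {i} ↔ k ∈ S := by
        simp [Finset.mem_symmDiff, hki]
      have hins : insert k (S ∆ {i}) = (insert k S) ∆ {i} := by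
        ext x
        by_cases hxk : x = k
        · subst hxk
          simp [Finset.mem_insert, Finset.mem_symmDiff, hki]
        · simp [Finset.mem_insert, Finset.mem_symmDiff, hxk]
      rw [if_neg (show ¬(k = i ∧ i ∈ U ∧ j ∈ U ∧ i < j) from fun hcon => hki hcon.1)]
      simp only [hmem, hins]
      by_cases hc : j ∈ U ∧ k ∈ U ∧ k < j ∧ k ∉ S
      · rw [if_pos hc, addSelfF]
      · rw [if_neg hc, add_zero]
  · rw [Finset.sum_eq_single i (fun k hk hki => if_neg (fun hcon => hki hcon.1))
        (fun hiU => if_neg (fun hcon => hiU hcon.2.1))]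
    have hne : i < j → ¬ i = j := fun h => Nat.ne_of_lt h
    by_cases hij : i < j
    · rw [if_pos hij]
      simp only [Emap_apply]
      split_ifs <;> first | rfl | tauto
    · rw [if_neg hij]
      simp only [LinearMap.zero_apply, Pi.zero_apply]
      rw [if_neg (fun hcon => hij hcon.2.2.2)]


lemma addSelfE (x : Module.End F (VV F)) : x + x = 0 := by
  rw [← two_smul F x]
  have h : (2 : F) = 0 := by exact_mod_cast CharP.cast_eq_zero F 2
  rw [h, zero_smul]

lemma if_sum {α M : Type*} [AddCommMonoid M] (C : Prop) [Decidable C] (s : Finset α)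
    (f : α → M) : (if C then ∑ m ∈ s, f m else 0) = ∑ m ∈ s, if C then f m else 0 := by
  split_ifs <;> simp

lemma Esymm (i j : ℕ) : (Emap i j : Module.End F (VV F)) = Emap j i := by
  apply LinearMap.ext; intro v; funext p
  simp only [Emap_apply]
  split_ifs with h1 h2 h2 <;> try tauto
  congr 1
  refine Prod.ext ?_ rfl
  ext x; simp only [Finset.mem_erase]; tauto

lemma Eself (i : ℕ) : (Emap i i : Module.End F (VV F)) = 0 := by
  apply LinearMap.ext; intro v; funext p
  simp [Emap_apply]

lemma AA_comm (i j : ℕ) : (Amap i * Amap j : Module.End F (VV F)) = Amap j * Amap i := by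
  apply LinearMap.ext; intro v; funext p
  simp only [Module.End.mul_apply, Amap_apply]
  congr 2
  rw [symmDiff_assoc, symmDiff_assoc, symmDiff_comm ({j} : Finset ℕ)]

lemma AA_self (i : ℕ) : (Amap i * Amap i : Module.End F (VV F)) = 1 := by
  apply LinearMap.ext; intro v; funext p
  simp only [Module.End.mul_apply, Amap_apply, Module.End.one_apply]
  rw [symmDiff_symmDiff_cancel_right]

lemma EA (a b c : ℕ) : (Emap a b * Amap c : Module.End F (VV F)) = Amap c * Emap a b := by
  apply LinearMap.ext; intro v; funext p
  simp only [Module.End.mul_apply, Amap_apply, Emap_apply]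

lemma EE_pair (a b c d : ℕ) :
    (Emap a b * Emap c d : Module.End F (VV F)) = Emap a c * Emap b d := by
  apply LinearMap.ext; intro v; funext p
  simp only [Module.End.mul_apply, Emap_apply, Finset.mem_erase]
  split_ifs <;> try tauto
  congr 1
  refine Prod.ext ?_ rfl
  ext x; simp only [Finset.mem_erase]; tauto

lemma EE1 (i j k : ℕ) : (Emap i j * Emap j k : Module.End F (VV F)) = 0 := by
  apply LinearMap.ext; intro v; funext p
  simp only [Module.End.mul_apply, Emap_apply, Finset.mem_erase, LinearMap.zero_apply]
  split_ifs <;> tauto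

lemma EE2 (i j k : ℕ) : (Emap i j * Emap i k : Module.End F (VV F)) = 0 := by
  apply LinearMap.ext; intro v; funext p
  simp only [Module.End.mul_apply, Emap_apply, Finset.mem_erase, LinearMap.zero_apply]
  split_ifs <;> tauto

lemma EB0a (i j : ℕ) : (Emap i j * Bmap i : Module.End F (VV F)) = 0 := by
  apply LinearMap.ext; intro v; funext p
  simp only [Module.End.mul_apply, Emap_apply, Bmap_apply, LinearMap.zero_apply]
  split_ifs with h
  · refine Finset.sum_eq_zero fun k hk => ?_
    rw [if_neg]
    simp only [Finset.mem_erase]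
    tauto
  · rfl

lemma EB0b (i j : ℕ) : (Emap i j * Bmap j : Module.End F (VV F)) = 0 := by
  apply LinearMap.ext; intro v; funext p
  simp only [Module.End.mul_apply, Emap_apply, Bmap_apply, LinearMap.zero_apply]
  split_ifs with h
  · refine Finset.sum_eq_zero fun k hk => ?_
    rw [if_neg]
    simp only [Finset.mem_erase]
    tauto
  · rfl

lemma BB_self (i : ℕ) : (Bmap i * Bmap i : Module.End F (VV F)) = 0 := by
  apply LinearMap.ext; intro v; funext p
  simp only [Module.End.mul_apply, Bmap_apply, LinearMap.zero_apply]
  refine Finset.sum_eq_zero fun k hk => ?_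
  split_ifs with h
  · refine Finset.sum_eq_zero fun m hm => ?_
    rw [if_neg]
    simp only [Finset.mem_erase]
    tauto
  · rfl

lemma EB (a b c : ℕ) : (Emap a b * Bmap c : Module.End F (VV F)) = Bmap c * Emap a b := by
  apply LinearMap.ext; intro v; funext p; obtain ⟨U, S⟩ := p
  simp only [Module.End.mul_apply, Emap_apply, Bmap_apply, if_sum]
  rw [Finset.sum_subset
    (((Finset.erase_subset b (U.erase a)).trans (Finset.erase_subset a U)))
    (fun m hm hnm => by
      split_ifs with h1 h2
      · exact absurd h2.2.1 hnm
      · rfl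
      · rfl)]
  refine Finset.sum_congr rfl fun k hk => ?_
  simp only [Finset.mem_erase]
  split_ifs <;> try tauto
  congr 1
  refine Prod.ext ?_ rfl
  ext x; simp only [Finset.mem_erase]; tauto

lemma BB (i j : ℕ) : (Bmap i * Bmap j : Module.End F (VV F)) = Bmap j * Bmap i := by
  apply LinearMap.ext; intro v; funext p; obtain ⟨U, S⟩ := p
  simp only [Module.End.mul_apply, Bmap_apply, if_sum]
  trans ∑ k ∈ U, ∑ m ∈ U, if i ∈ U ∧ k ∈ U ∧ k < i ∧ k ∉ S then
      (if j ∈ (U.erase i).erase k ∧ m ∈ (U.erase i).erase k ∧ m < j ∧ m ∉ insert k S then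
        v (((((U.erase i).erase k).erase j).erase m), insert m (insert k S)) else 0) else 0
  · refine Finset.sum_congr rfl fun k hk => ?_
    exact Finset.sum_subset
      ((Finset.erase_subset k (U.erase i)).trans (Finset.erase_subset i U))
      (fun m hm hnm => by
        split_ifs with h1 h2
        · exact absurd h2.2.1 hnm
        · rfl
        · rfl)
  trans ∑ m ∈ U, ∑ k ∈ U, if j ∈ U ∧ m ∈ U ∧ m < j ∧ m ∉ S then
      (if i ∈ (U.erase j).erase m ∧ k ∈ (U.erase j).erase m ∧ k < i ∧ k ∉ insert m S then
        v (((((U.erase j).erase m).erase i).erase k), insert k (insert m S)) else 0) else 0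
  · rw [Finset.sum_comm]
    refine Finset.sum_congr rfl fun m hm => Finset.sum_congr rfl fun k hk => ?_
    simp only [Finset.mem_erase, Finset.mem_insert]
    split_ifs <;> try tauto
    congr 1
    refine Prod.ext ?_ ?_
    · ext x; simp only [Finset.mem_erase]; tauto
    · ext x; simp only [Finset.mem_insert]; tauto
  · refine Finset.sum_congr rfl fun m hm => Eq.symm ?_
    exact Finset.sum_subset
      ((Finset.erase_subset m (U.erase j)).trans (Finset.erase_subset j U))
      (fun k hk hnk => by
        split_ifs with h1 h2
        · exact absurd h2.2.1 hnk
        · rfl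
        · rfl)

def Xmap (i : ℕ) : Module.End F (VV F) := Amap i + Bmap i

lemma XX (i : ℕ) : (Xmap i * Xmap i : Module.End F (VV F)) = 1 := by
  have h := AB (F := F) i i
  rw [if_neg (lt_irrefl i)] at h
  unfold Xmap
  rw [add_mul, mul_add, mul_add, AA_self, BB_self, add_zero, add_assoc, h, add_zero]

lemma CAR (i j : ℕ) :
    (Xmap i * Xmap j + Xmap j * Xmap i : Module.End F (VV F)) = Emap i j := by
  have hab := AB (F := F) i j
  have hba := AB (F := F) j i
  have hbb := BB (F := F) i j
  have haa := AA_comm (F := F) i j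
  unfold Xmap
  rw [add_mul, mul_add, mul_add, add_mul, mul_add, mul_add]
  have key : ∀ (a1 a2 a3 a4 b1 b2 b3 b4 : Module.End F (VV F)),
      ((a1+a2)+(a3+a4))+((b1+b2)+(b3+b4)) = (a1+b1) + ((a2+b3)+((b2+a3)+(a4+b4))) := by
    intros; abel
  rw [key, haa, hab, hba, hbb, addSelfE, addSelfE, zero_add, add_zero]
  rcases lt_trichotomy i j with h | h | h
  · rw [if_pos h, if_neg (by omega), add_zero]
  · subst h
    rw [if_neg (lt_irrefl i), Eself, zero_add]
  · rw [if_neg (by omega), if_pos h, zero_add, Esymm]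

lemma Xswap (i j : ℕ) :
    (Xmap j * Xmap i : Module.End F (VV F)) = Xmap i * Xmap j + Emap i j := by
  have h := CAR (F := F) i j
  calc Xmap j * Xmap i = (Xmap i * Xmap j + Xmap j * Xmap i) + Xmap i * Xmap j := by
        rw [add_right_comm, addSelfE, zero_add]
  _ = Emap i j + Xmap i * Xmap j := by rw [h]
  _ = Xmap i * Xmap j + Emap i j := add_comm _ _

lemma EX (a b c : ℕ) : (Emap a b * Xmap c : Module.End F (VV F)) = Xmap c * Emap a b := by
  unfold Xmap
  rw [mul_add, add_mul, EA, EB]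

def Dmap (i j : ℕ) : Module.End F (VV F) := Emap i j * Xmap i * Xmap j

lemma D_EAA (i j : ℕ) : (Dmap i j : Module.End F (VV F)) = Emap i j * Amap i * Amap j := by
  unfold Dmap Xmap
  have h1 : (Emap i j * (Amap i + Bmap i) : Module.End F (VV F)) = Emap i j * Amap i := by
    rw [mul_add, EB0a, add_zero]
  rw [h1, mul_add, EA, mul_assoc (Amap i) (Emap i j) (Bmap j), EB0b, mul_zero, add_zero, ← EA]

lemma Dmap_apply (i j : ℕ) (v : VV F) (p : Finset ℕ × Finset ℕ) :
    Dmap i j v p = if i ≠ j ∧ i ∈ p.1 ∧ j ∈ p.1 then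
      v ((p.1.erase i).erase j, (p.2 ∆ {i}) ∆ {j}) else 0 := by
  rw [D_EAA]
  simp only [Module.End.mul_apply, Emap_apply, Amap_apply]

lemma C_eq (i j : ℕ) :
    (Xmap i * Xmap j * Xmap i * Xmap j : Module.End F (VV F)) = 1 + Dmap i j := by
  rw [mul_assoc (Xmap i) (Xmap j) (Xmap i), Xswap i j, mul_add, add_mul,
    ← mul_assoc (Xmap i) (Xmap i), XX, one_mul, XX, ← EX]
  rfl

lemma DX (i j k : ℕ) : (Dmap i j * Xmap k : Module.End F (VV F)) = Xmap k * Dmap i j := by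
  unfold Dmap
  rw [mul_assoc (Emap i j * Xmap i) (Xmap j) (Xmap k)]
  rw [Xswap k j]
  rw [mul_add]
  rw [mul_assoc (Emap i j) (Xmap i) (Emap k j)]
  rw [← EX k j i]
  rw [← mul_assoc (Emap i j) (Emap k j) (Xmap i)]
  rw [Esymm k j]
  rw [EE1, zero_mul, add_zero]
  rw [mul_assoc (Emap i j) (Xmap i) (Xmap k * Xmap j)]
  rw [← mul_assoc (Xmap i) (Xmap k) (Xmap j)]
  rw [Xswap k i]
  rw [add_mul]
  rw [mul_add]
  rw [← mul_assoc (Emap i j) (Emap k i) (Xmap j)]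
  rw [Esymm k i]
  rw [EE2, zero_mul, add_zero]
  rw [mul_assoc (Xmap k) (Xmap i) (Xmap j)]
  rw [← mul_assoc (Emap i j) (Xmap k) (Xmap i * Xmap j)]
  rw [EX i j k]
  rw [mul_assoc (Xmap k) (Emap i j) (Xmap i * Xmap j)]
  rw [← mul_assoc (Emap i j) (Xmap i) (Xmap j)]

lemma Dmul (a b c d : ℕ) :
    (Dmap a b * Dmap c d + Dmap a c * Dmap b d : Module.End F (VV F)) = 0 := by
  apply LinearMap.ext; intro v; funext p; obtain ⟨U, S⟩ := p
  simp only [LinearMap.add_apply, Pi.add_apply, Module.End.mul_apply, Dmap_apply,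
    Finset.mem_erase, LinearMap.zero_apply, Pi.zero_apply]
  refine (show ∀ x y : F, x = y → x + y = 0 from fun x y h => by rw [h]; exact addSelfF y) _ _ ?_
  split_ifs <;> try tauto
  have hset : ∀ (T x y z : Finset ℕ), T ∆ x ∆ y ∆ z = T ∆ y ∆ x ∆ z := by
    intro T x y z
    congr 1
    rw [symmDiff_assoc, symmDiff_assoc, symmDiff_comm x y]
  rw [show (((U.erase a).erase b).erase c).erase d = (((U.erase a).erase c).erase b).erase d from by
      ext x; simp only [Finset.mem_erase]; tauto]
  rw [hset (S ∆ {a}) {b} {c} {d}]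


variable (F)

noncomputable def uX (i : ℕ) : (Module.End F (VV F))ˣ :=
  ⟨Xmap i, Xmap i, XX i, XX i⟩

lemma gc_eq_one {G : Type*} [Group G] {a b : G} (h : a * b = b * a) : gc a b = 1 := by
  unfold gc
  rw [mul_assoc, mul_assoc, h]
  group

lemma hrels : ∀ r ∈ grpRels, FreeGroup.lift (fun i => uX F i) r = 1 := by
  rintro r (⟨i, rfl⟩ | ⟨i, j, k, rfl⟩)
  · rw [map_pow, sq]
    simp only [FreeGroup.lift_apply_of]
    exact Units.ext (XX i)
  · have hmap : ∀ (a b : FreeGroup ℕ), FreeGroup.lift (fun i => uX F i) (gc a b) =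
        gc (FreeGroup.lift (fun i => uX F i) a) (FreeGroup.lift (fun i => uX F i) b) := by
      intro a b
      simp [gc, map_mul, map_inv]
    rw [hmap, hmap]
    simp only [FreeGroup.lift_apply_of]
    apply gc_eq_one
    apply Units.ext
    have hval : ((gc (uX F i) (uX F j) : (Module.End F (VV F))ˣ) : Module.End F (VV F))
        = Xmap i * Xmap j * Xmap i * Xmap j := rfl
    rw [Units.val_mul, Units.val_mul, hval,
      show ((uX F k : (Module.End F (VV F))ˣ) : Module.End F (VV F)) = Xmap k from rfl,
      C_eq, add_mul, mul_add, one_mul, mul_one, DX]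

noncomputable def φG : GrpG →* (Module.End F (VV F))ˣ :=
  PresentedGroup.toGroup (hrels F)

lemma φG_of (i : ℕ) : φG F (yy i) = uX F i :=
  PresentedGroup.toGroup.of (hrels F)

noncomputable def ΦA : MonoidAlgebra F GrpG →ₐ[F] Module.End F (VV F) :=
  MonoidAlgebra.lift F (Module.End F (VV F)) GrpG ((Units.coeHom _).comp (φG F))

lemma ΦA_of (g : GrpG) :
    ΦA F (MonoidAlgebra.of F GrpG g) = ((φG F g : (Module.End F (VV F))ˣ) : Module.End F (VV F)) := by
  simp [ΦA, MonoidAlgebra.lift_of]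

lemma ΦA_dd (i j : ℕ) : ΦA F (dd F i j) = Dmap i j := by
  unfold dd
  rw [map_add, map_one, ΦA_of]
  have h1 : φG F (gc (yy i) (yy j)) = gc (uX F i) (uX F j) := by
    simp [gc, map_mul, map_inv, φG_of]
  rw [h1]
  have h2 : ((gc (uX F i) (uX F j) : (Module.End F (VV F))ˣ) : Module.End F (VV F))
      = Xmap i * Xmap j * Xmap i * Xmap j := rfl
  rw [h2, C_eq, add_right_comm, addSelfE, zero_add]

lemma II_vanish : ∀ x ∈ II F, ΦA F x = 0 := by
  intro x hx
  unfold II at hx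
  have hker : x ∈ TwoSidedIdeal.ker (ΦA F) := by
    refine TwoSidedIdeal.mem_span_iff.mp hx _ fun y hy => ?_
    obtain ⟨a, b, c, d, rfl⟩ := hy
    rw [SetLike.mem_coe, TwoSidedIdeal.mem_ker]
    rw [map_add, map_mul, map_mul, ΦA_dd, ΦA_dd, ΦA_dd, ΦA_dd]
    exact Dmul a b c d
  exact (TwoSidedIdeal.mem_ker _).mp hker

lemma prodEval (ℓ : ℕ) (v : VV F) (U S : Finset ℕ) :
    ((List.ofFn fun s : Fin ℓ =>
        (Dmap (2 * (s : ℕ) + 1) (2 * (s : ℕ) + 2) : Module.End F (VV F))).prod) v (U, S)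
      = if Finset.Icc 1 (2 * ℓ) ⊆ U then
          v (U \ Finset.Icc 1 (2 * ℓ), S ∆ Finset.Icc 1 (2 * ℓ)) else 0 := by
  induction ℓ generalizing v with
  | zero =>
    have h0 : Finset.Icc 1 (2 * 0) = (∅ : Finset ℕ) := by
      apply Finset.Icc_eq_empty; omega
    rw [h0]
    simp only [List.ofFn_zero, List.prod_nil, Module.End.one_apply]
    rw [if_pos (Finset.empty_subset U), Finset.sdiff_empty,
      ← Finset.bot_eq_empty, symmDiff_bot]
  | succ n ih =>
    rw [List.ofFn_succ', List.prod_concat]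
    simp only [Fin.coe_castSucc, Fin.val_last]
    rw [Module.End.mul_apply, ih, Dmap_apply]
    have harith : 2 * (n + 1) = 2 * n + 2 := by ring
    rw [harith]
    by_cases h1 : Finset.Icc 1 (2 * n) ⊆ U
    · rw [if_pos h1]
      by_cases h2 : (2 * n + 1) ∈ U
      · by_cases h3 : (2 * n + 2) ∈ U
        · rw [if_pos ⟨by omega, Finset.mem_sdiff.mpr ⟨h2, by rw [Finset.mem_Icc]; omega⟩,
            Finset.mem_sdiff.mpr ⟨h3, by rw [Finset.mem_Icc]; omega⟩⟩]
          rw [if_pos (by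
            intro x hx
            rw [Finset.mem_Icc] at hx
            rcases (by omega : x ≤ 2 * n ∨ x = 2 * n + 1 ∨ x = 2 * n + 2) with h | h | h
            · exact h1 (Finset.mem_Icc.mpr ⟨hx.1, h⟩)
            · exact h ▸ h2
            · exact h ▸ h3)]
          congr 1
          refine Prod.ext ?_ ?_
          · ext x
            simp only [Finset.mem_erase, Finset.mem_sdiff, Finset.mem_Icc]
            by_cases hxU : x ∈ U <;> simp [hxU] <;> omega
          · ext x
            simp only [Finset.mem_symmDiff, Finset.mem_singleton, Finset.mem_Icc]
            by_cases hxS : x ∈ S <;> simp [hxS] <;> omega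
        · rw [if_neg (fun hcon => h3 (Finset.mem_sdiff.mp hcon.2.2).1),
            if_neg (fun hcon => h3 (hcon (show (2 * n + 2) ∈ Finset.Icc 1 (2 * n + 2) from
              Finset.mem_Icc.mpr (by omega))))]
      · rw [if_neg (fun hcon => h2 (Finset.mem_sdiff.mp hcon.2.1).1),
          if_neg (fun hcon => h2 (hcon (show (2 * n + 1) ∈ Finset.Icc 1 (2 * n + 2) from
            Finset.mem_Icc.mpr (by omega))))]
    · rw [if_neg h1,
        if_neg (fun hcon => h1 ((Finset.Icc_subset_Icc_right (by omega)).trans hcon))]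

end StmtAux

/-- over a field of characteristic 2, for every `ℓ > 0` the product
`d_{12} d_{34} ⋯ d_{(2ℓ-1)(2ℓ)} = ((y₁,y₂)+1) ⋯ ((y_{2ℓ-1},y_{2ℓ})+1)` does not
belong to `I`. -/
theorem groupAlgebra_prod_d_not_mem_ideal
    (F : Type*) [Field F] [CharP F 2] (ℓ : ℕ) (hℓ : 0 < ℓ) :
    (List.ofFn fun s : Fin ℓ => dd F (2 * s + 1) (2 * s + 2)).prod ∉ II F := by
  intro hmem
  have h0 : StmtAux.ΦA F ((List.ofFn fun s : Fin ℓ => dd F (2 * s + 1) (2 * s + 2)).prod) = 0 :=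
    StmtAux.II_vanish F _ hmem
  rw [map_list_prod, List.map_ofFn] at h0
  have h1 : (List.ofFn ((StmtAux.ΦA F) ∘ fun s : Fin ℓ => dd F (2 * s + 1) (2 * s + 2)))
      = List.ofFn (fun s : Fin ℓ =>
          (StmtAux.Dmap (2 * (s : ℕ) + 1) (2 * (s : ℕ) + 2) : Module.End F (StmtAux.VV F))) := by
    congr 1
    funext s
    simp [Function.comp, StmtAux.ΦA_dd]
  rw [h1] at h0
  have h2 := StmtAux.prodEval F ℓ (fun p => if p = (∅, ∅) then (1 : F) else 0)
    (Finset.Icc 1 (2 * ℓ)) (Finset.Icc 1 (2 * ℓ))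
  rw [h0, if_pos (subset_refl _), Finset.sdiff_self, symmDiff_self] at h2
  simp only [LinearMap.zero_apply, Pi.zero_apply] at h2
  rw [← Finset.bot_eq_empty, if_pos rfl] at h2
  exact zero_ne_one h2
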